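/- (Theorem 5.5 of the paper, one-dimensional case, exact form.) Let η ∈ ℕ and ℓ ∈ ℤ. Let W ∈ ℚ⁴ be any integrable random vector with E[W] = 0 (the binary-truncation errors of Steps 2 and decompression Step 2); let θ₁,…,θ₆ be independent uniform on {−1/2,0} (the rounding errors of the lossy forward transform); and let R ∈ ℤ⁴ have independent components R_j = Σ_{i=0}^{η} D_{j,i}·(−2)^i with independent fair Bernoulli digits D_{j,i} ∈ {0,1} (the truncated low negabinary digits of Step 8). Then the expected value of the total decompressed error 2^ℓ·Linv·(W + Θ(θ₁,…,θ₆) − R) equals 2^ℓ·Linv·( E₁ + (((−2)^{η+1} − 1)/6)·𝟙 ), which is nonzero; hence ZFP's compression error is biased. -/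

import Mathlib

open Matrix

/-- ZFP's backward decorrelating transform. -/
def Linv : Matrix (Fin 4) (Fin 4) ℚ :=
  (1 / 4 : ℚ) • !![4, 6, -4, -1; 4, 2, 4, 5; 4, -2, 4, -5; 4, -6, -4, 1]

/-- The error form `Θ(θ₁,…,θ₆)`. -/
def Theta (θ : Fin 6 → ℚ) : Fin 4 → ℚ :=
  ![-((θ 0 + θ 1) / 2 + θ 3),
    -((5 * θ 0 - θ 1) / 8 - (5 / 4) * θ 2 - θ 4 / 2 - θ 5),
    -((θ 1 - θ 0) / 2 - θ 3),
    -(-(θ 0 + 3 * θ 1) / 4 + θ 2 / 2 + θ 4)]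

/-- `E₁ = (1/2, -9/16, -1/4, 1/8)`. -/
def E1 : Fin 4 → ℚ := ![1 / 2, -(9 / 16), -(1 / 4), 1 / 8]

open Finset

lemma cons_six_five {α : Type*} (a b c d e f : α) : ![a, b, c, d, e, f] 5 = f := rfl

/-- Generic fiberwise expectation: if each fiber of `f` has probability `q`,
then `E[g ∘ f] = q · ∑ g`. -/
lemma exp_fiber {Ω α : Type*} [Fintype Ω] [Fintype α] [DecidableEq α]
    (p : Ω → ℚ) (f : Ω → α) (q : ℚ)
    (hf : ∀ a, ∑ ω ∈ univ.filter (fun ω => f ω = a), p ω = q)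
    (g : α → ℚ) : ∑ ω, p ω * g (f ω) = ∑ a, g a * q := by
  have h := Finset.sum_fiberwise_eq_sum_filter univ univ f (fun ω => p ω * g (f ω))
  simp only [mem_univ, filter_true] at h
  rw [← h]
  apply Finset.sum_congr rfl
  intro a _
  have : ∀ ω ∈ univ.filter (fun ω => f ω = a), p ω * g (f ω) = g a * p ω := by
    intro ω hω; simp only [mem_filter] at hω; rw [hω.2]; ring
  rw [Finset.sum_congr rfl this, ← Finset.mul_sum, hf a]

/-- Sum of one evaluated bit over all bit-functions (one index). -/
lemma sum_eval1 {I : Type*} [Fintype I] [DecidableEq I] (k : I) :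
    ∑ b : I → Fin 2, ((b k : ℕ) : ℚ) = (Fintype.card (I → Fin 2) : ℚ) / 2 := by
  have hfin : ∀ x : Fin 2, x + 1 + 1 = x := by decide
  have hinv : Function.Involutive (fun b : I → Fin 2 => Function.update b k (b k + 1)) := by
    intro b; funext i
    rcases eq_or_ne i k with rfl | h
    · simp only [Function.update_self]
      exact hfin (b i)
    · simp [Function.update_of_ne h]
  let σ := hinv.toPerm _
  have h1 : ∑ b : I → Fin 2, ((b k : ℕ) : ℚ) = ∑ b : I → Fin 2, (((σ b) k : ℕ) : ℚ) :=
    (Equiv.sum_comp σ (fun b => ((b k : ℕ) : ℚ))).symm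
  have h3 : ∀ b : I → Fin 2, ((b k : ℕ) : ℚ) + (((σ b) k : ℕ) : ℚ) = 1 := by
    intro b
    have hk : (σ b) k = b k + 1 := by
      simp [σ, Function.Involutive.toPerm]
    rw [hk]
    have : ∀ x : Fin 2, ((x : ℕ) : ℚ) + (((x + 1 : Fin 2) : ℕ) : ℚ) = 1 := by
      intro x; fin_cases x <;> norm_num [show ((1 : Fin 2) + 1) = 0 from rfl]
    exact this (b k)
  have h2 : (∑ b : I → Fin 2, ((b k : ℕ) : ℚ)) + ∑ b : I → Fin 2, (((σ b) k : ℕ) : ℚ)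
      = (Fintype.card (I → Fin 2) : ℚ) := by
    rw [← Finset.sum_add_distrib, Finset.sum_congr rfl (fun b _ => h3 b)]
    simp [card_univ]
  rw [← h1] at h2
  linarith

/-- Sum of one evaluated bit over all bit-functions (two indices). -/
lemma sum_eval2 {I J : Type*} [Fintype I] [DecidableEq I] [Fintype J] [DecidableEq J]
    (k : I) (l : J) :
    ∑ b : I → J → Fin 2, ((b k l : ℕ) : ℚ) = (Fintype.card (I → J → Fin 2) : ℚ) / 2 := by
  have hfin : ∀ x : Fin 2, x + 1 + 1 = x := by decide
  have hinv : Function.Involutive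
      (fun b : I → J → Fin 2 => Function.update b k (Function.update (b k) l (b k l + 1))) := by
    intro b; funext i j
    rcases eq_or_ne i k with rfl | h
    · simp only [Function.update_self]
      rcases eq_or_ne j l with rfl | hj
      · simp only [Function.update_self]
        exact hfin (b i j)
      · simp [Function.update_of_ne hj]
    · simp [Function.update_of_ne h]
  let σ := hinv.toPerm _
  have h1 : ∑ b : I → J → Fin 2, ((b k l : ℕ) : ℚ)
      = ∑ b : I → J → Fin 2, (((σ b) k l : ℕ) : ℚ) :=
    (Equiv.sum_comp σ (fun b => ((b k l : ℕ) : ℚ))).symm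
  have h3 : ∀ b : I → J → Fin 2, ((b k l : ℕ) : ℚ) + (((σ b) k l : ℕ) : ℚ) = 1 := by
    intro b
    have hk : (σ b) k l = b k l + 1 := by
      simp [σ, Function.Involutive.toPerm]
    rw [hk]
    have : ∀ x : Fin 2, ((x : ℕ) : ℚ) + (((x + 1 : Fin 2) : ℕ) : ℚ) = 1 := by
      intro x; fin_cases x <;> norm_num [show ((1 : Fin 2) + 1) = 0 from rfl]
    exact this (b k l)
  have h2 : (∑ b : I → J → Fin 2, ((b k l : ℕ) : ℚ))
      + ∑ b : I → J → Fin 2, (((σ b) k l : ℕ) : ℚ)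
      = (Fintype.card (I → J → Fin 2) : ℚ) := by
    rw [← Finset.sum_add_distrib, Finset.sum_congr rfl (fun b _ => h3 b)]
    simp [card_univ]
  rw [← h1] at h2
  linarith

/-- The sign patterns for `θ`. -/
def pat (s : Fin 6 → Fin 2) : Fin 6 → ℚ := fun j => ![(-(1 / 2) : ℚ), 0] (s j)

lemma pat_injective : Function.Injective pat := by
  intro s t h
  funext j
  have hj := congrFun h j
  have : ∀ x y : Fin 2, (![(-(1 / 2) : ℚ), 0] x = ![(-(1 / 2) : ℚ), 0] y) → x = y := by
    intro x y
    fin_cases x <;> fin_cases y <;> norm_num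
  exact this _ _ hj

/-- Expectation of a function of a uniform-on-patterns random vector. -/
lemma exp_pat {Ω : Type*} [Fintype Ω] (p : Ω → ℚ) (hp0 : ∀ ω, 0 ≤ p ω)
    (hp1 : ∑ ω, p ω = 1) (θ : Ω → Fin 6 → ℚ)
    (hθ : ∀ s : Fin 6 → Fin 2, ∑ ω ∈ univ.filter (fun ω => θ ω = pat s), p ω = 1 / 2 ^ 6)
    (g : (Fin 6 → ℚ) → ℚ) :
    ∑ ω, p ω * g (θ ω) = ∑ s : Fin 6 → Fin 2, g (pat s) * (1 / 2 ^ 6) := by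
  classical
  set B : Finset Ω := univ.biUnion (fun s : Fin 6 → Fin 2 => univ.filter (fun ω => θ ω = pat s))
    with hB
  have hdisj : ∀ s ∈ (univ : Finset (Fin 6 → Fin 2)), ∀ t ∈ (univ : Finset (Fin 6 → Fin 2)),
      s ≠ t → Disjoint (univ.filter (fun ω => θ ω = pat s))
        (univ.filter (fun ω => θ ω = pat t)) := by
    intro s _ t _ hst
    rw [Finset.disjoint_left]
    intro ω h1 h2
    simp only [mem_filter, mem_univ, true_and] at h1 h2
    exact hst (pat_injective (h1 ▸ h2))
  have hBsum : ∑ ω ∈ B, p ω = 1 := by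
    rw [hB, Finset.sum_biUnion (fun s hs t ht hst => hdisj s hs t ht hst)]
    rw [Finset.sum_congr rfl (fun s _ => hθ s)]
    simp only [Finset.sum_const, card_univ]
    rw [Fintype.card_fun]
    norm_num
  have hout : ∀ ω, ω ∉ B → p ω = 0 := by
    intro ω hω
    have hsplit : ∑ ω ∈ univ \ B, p ω + ∑ ω ∈ B, p ω = ∑ ω, p ω :=
      Finset.sum_sdiff (Finset.subset_univ B)
    have hz : ∑ ω ∈ univ \ B, p ω = 0 := by
      rw [hBsum, hp1] at hsplit; linarith
    have := (Finset.sum_eq_zero_iff_of_nonneg (fun x _ => hp0 x)).mp hz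
    exact this ω (Finset.mem_sdiff.mpr ⟨Finset.mem_univ ω, hω⟩)
  have hstep : ∑ ω, p ω * g (θ ω) = ∑ ω ∈ B, p ω * g (θ ω) := by
    symm
    apply Finset.sum_subset (Finset.subset_univ B)
    intro x _ hx
    rw [hout x hx, zero_mul]
  rw [hstep, hB, Finset.sum_biUnion (fun s hs t ht hst => hdisj s hs t ht hst)]
  apply Finset.sum_congr rfl
  intro s _
  have : ∀ ω ∈ univ.filter (fun ω => θ ω = pat s), p ω * g (θ ω) = g (pat s) * p ω := by
    intro ω hω
    simp only [mem_filter] at hω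
    rw [hω.2]; ring
  rw [Finset.sum_congr rfl this, ← Finset.mul_sum, hθ s]

/-- The coefficient matrix of the linear form `Theta`. -/
def C : Fin 4 → Fin 6 → ℚ :=
  ![![-(1/2), -(1/2), 0, -1, 0, 0],
    ![-(5/8), 1/8, 5/4, 0, 1/2, 1],
    ![1/2, -(1/2), 0, 1, 0, 0],
    ![1/4, 3/4, -(1/2), 0, -1, 0]]

lemma Theta_eq (v : Fin 6 → ℚ) (j : Fin 4) : Theta v j = ∑ k, C j k * v k := by
  fin_cases j <;> simp [Theta, C, Fin.sum_univ_six, cons_six_five] <;> ring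

lemma sum_pat (k : Fin 6) : ∑ s : Fin 6 → Fin 2, pat s k = -16 := by
  have hx : ∀ x : Fin 2, (![(-(1 / 2) : ℚ), 0] x) = (((x : ℕ) : ℚ) - 1) / 2 := by
    intro x; fin_cases x <;> norm_num
  have : ∀ s : Fin 6 → Fin 2, pat s k = (((s k : ℕ) : ℚ) - 1) / 2 := fun s => hx (s k)
  rw [Finset.sum_congr rfl (fun s _ => this s), ← Finset.sum_div, Finset.sum_sub_distrib,
    sum_eval1 k]
  simp only [Finset.sum_const, card_univ, nsmul_eq_mul, mul_one]
  rw [Fintype.card_fun]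
  norm_num

lemma sum_Theta_pat (j : Fin 4) :
    ∑ s : Fin 6 → Fin 2, Theta (pat s) j = 64 * E1 j := by
  have h1 : ∑ s : Fin 6 → Fin 2, Theta (pat s) j
      = ∑ k : Fin 6, C j k * (∑ s : Fin 6 → Fin 2, pat s k) := by
    rw [Finset.sum_congr rfl (fun s _ => Theta_eq (pat s) j), Finset.sum_comm]
    exact Finset.sum_congr rfl (fun k _ => by rw [Finset.mul_sum])
  rw [h1, Finset.sum_congr rfl (fun k _ => by rw [sum_pat k])]
  fin_cases j <;> simp [C, E1, Fin.sum_univ_six, cons_six_five] <;> norm_num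

theorem total_error_biased (η : ℕ) (ℓ : ℤ) (Ω : Type*) [Fintype Ω]
    (p : Ω → ℚ) (hp0 : ∀ ω, 0 ≤ p ω) (hp1 : ∑ ω, p ω = 1)
    (W : Ω → Fin 4 → ℚ) (hW : ∀ i, ∑ ω, p ω * W ω i = 0)
    (θ : Ω → Fin 6 → ℚ)
    (hθ : ∀ s : Fin 6 → Fin 2,
      ∑ ω ∈ Finset.univ.filter (fun ω => θ ω = fun j => ![(-(1 / 2) : ℚ), 0] (s j)), p ω =
        1 / 2 ^ 6)
    (D : Ω → Fin 4 → Fin (η + 1) → Fin 2)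
    (hD : ∀ b : Fin 4 → Fin (η + 1) → Fin 2,
      ∑ ω ∈ Finset.univ.filter (fun ω => D ω = b), p ω = 1 / 2 ^ (4 * (η + 1)))
    (R : Ω → Fin 4 → ℚ)
    (hR : ∀ ω j, R ω j = ∑ i : Fin (η + 1), ((D ω j i : ℕ) : ℚ) * (-2) ^ (i : ℕ)) :
    (fun i => ∑ ω, p ω *
        ((2 : ℚ) ^ ℓ * Linv.mulVec (fun j => W ω j + Theta (θ ω) j - R ω j) i)) =
      (fun i => (2 : ℚ) ^ ℓ *
        Linv.mulVec (fun j => E1 j + ((-2 : ℚ) ^ (η + 1) - 1) / 6) i) ∧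
      (fun i => (2 : ℚ) ^ ℓ *
        Linv.mulVec (fun j => E1 j + ((-2 : ℚ) ^ (η + 1) - 1) / 6) i) ≠ 0 := by
  classical
  have hθ' : ∀ s : Fin 6 → Fin 2,
      ∑ ω ∈ univ.filter (fun ω => θ ω = pat s), p ω = 1 / 2 ^ 6 := hθ
  have hThetaExp : ∀ j, ∑ ω, p ω * Theta (θ ω) j = E1 j := by
    intro j
    rw [exp_pat p hp0 hp1 θ hθ' (fun v => Theta v j), ← Finset.sum_mul, sum_Theta_pat j]
    ring
  have hDexp : ∀ (j : Fin 4) (i : Fin (η + 1)),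
      ∑ ω, p ω * ((D ω j i : ℕ) : ℚ) = 1 / 2 := by
    intro j i
    rw [exp_fiber p D (1 / 2 ^ (4 * (η + 1))) hD (fun b => ((b j i : ℕ) : ℚ)),
      ← Finset.sum_mul, sum_eval2 j i]
    have hc : (Fintype.card (Fin 4 → Fin (η + 1) → Fin 2) : ℚ) = 2 ^ (4 * (η + 1)) := by
      rw [Fintype.card_fun, Fintype.card_fun, Fintype.card_fin, Fintype.card_fin,
        Fintype.card_fin]
      push_cast
      rw [← pow_mul, mul_comm]
    rw [hc]
    have h2 : (2 : ℚ) ^ (4 * (η + 1)) ≠ 0 := by positivity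
    field_simp
  have hRexp : ∀ j, ∑ ω, p ω * R ω j = (1 - (-2 : ℚ) ^ (η + 1)) / 6 := by
    intro j
    have h1 : ∀ ω, p ω * R ω j
        = ∑ i : Fin (η + 1), (p ω * ((D ω j i : ℕ) : ℚ)) * (-2) ^ (i : ℕ) := by
      intro ω
      rw [hR ω j, Finset.mul_sum]
      exact Finset.sum_congr rfl (fun i _ => by ring)
    rw [Finset.sum_congr rfl (fun ω _ => h1 ω), Finset.sum_comm]
    have h2 : ∀ i : Fin (η + 1),
        ∑ ω, (p ω * ((D ω j i : ℕ) : ℚ)) * (-2) ^ (i : ℕ)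
          = (1 / 2) * (-2 : ℚ) ^ (i : ℕ) := by
      intro i
      rw [← Finset.sum_mul, hDexp j i]
    rw [Finset.sum_congr rfl (fun i _ => h2 i), ← Finset.mul_sum]
    have h3 : ∑ i : Fin (η + 1), (-2 : ℚ) ^ (i : ℕ)
        = ((-2 : ℚ) ^ (η + 1) - 1) / (-2 - 1) := by
      rw [Fin.sum_univ_eq_sum_range (fun n => (-2 : ℚ) ^ n)]
      exact geom_sum_eq (by norm_num) (η + 1)
    rw [h3]; ring
  have key : ∀ j, ∑ ω, p ω * (W ω j + Theta (θ ω) j - R ω j)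
      = E1 j + ((-2 : ℚ) ^ (η + 1) - 1) / 6 := by
    intro j
    have h1 : ∀ ω, p ω * (W ω j + Theta (θ ω) j - R ω j)
        = p ω * W ω j + p ω * Theta (θ ω) j - p ω * R ω j := fun ω => by ring
    rw [Finset.sum_congr rfl (fun ω _ => h1 ω), Finset.sum_sub_distrib,
      Finset.sum_add_distrib, hW j, hThetaExp j, hRexp j]
    ring
  constructor
  · funext i
    simp only [Matrix.mulVec, dotProduct]
    have h1 : ∀ ω, p ω * ((2 : ℚ) ^ ℓ *
        ∑ j, Linv i j * (W ω j + Theta (θ ω) j - R ω j))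
        = ∑ j, (2 : ℚ) ^ ℓ * (Linv i j * (p ω * (W ω j + Theta (θ ω) j - R ω j))) := by
      intro ω
      rw [Finset.mul_sum, Finset.mul_sum]
      exact Finset.sum_congr rfl (fun j _ => by ring)
    rw [Finset.sum_congr rfl (fun ω _ => h1 ω), Finset.sum_comm, Finset.mul_sum]
    apply Finset.sum_congr rfl
    intro j _
    have h2 : ∑ ω, (2 : ℚ) ^ ℓ * (Linv i j * (p ω * (W ω j + Theta (θ ω) j - R ω j)))
        = (2 : ℚ) ^ ℓ * (Linv i j * ∑ ω, p ω * (W ω j + Theta (θ ω) j - R ω j)) := by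
      rw [Finset.mul_sum, Finset.mul_sum]
    rw [h2, key j]
  · intro hcontra
    have h0 := congrFun hcontra 0
    simp only [Matrix.mulVec, dotProduct, Pi.zero_apply] at h0
    rw [Fin.sum_univ_four] at h0
    have h2 : (2 : ℚ) ^ ℓ ≠ 0 := zpow_ne_zero ℓ (by norm_num)
    have h3 : Linv 0 0 * (E1 0 + ((-2 : ℚ) ^ (η + 1) - 1) / 6)
        + Linv 0 1 * (E1 1 + ((-2 : ℚ) ^ (η + 1) - 1) / 6)
        + Linv 0 2 * (E1 2 + ((-2 : ℚ) ^ (η + 1) - 1) / 6)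
        + Linv 0 3 * (E1 3 + ((-2 : ℚ) ^ (η + 1) - 1) / 6) = 0 :=
      (mul_eq_zero.mp h0).resolve_left h2
    have hval : (5 : ℚ) * (-2 : ℚ) ^ (η + 1) = 8 := by
      have e00 : Linv 0 0 = 1 := by norm_num [Linv]
      have e01 : Linv 0 1 = 3 / 2 := by norm_num [Linv]
      have e02 : Linv 0 2 = -1 := by norm_num [Linv, Matrix.cons_val_two]
      have e03 : Linv 0 3 = -(1 / 4) := by norm_num [Linv, Matrix.cons_val_three]
      have f0 : E1 0 = 1 / 2 := rfl
      have f1 : E1 1 = -(9 / 16) := rfl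
      have f2 : E1 2 = -(1 / 4) := rfl
      have f3 : E1 3 = 1 / 8 := rfl
      rw [e00, e01, e02, e03, f0, f1, f2, f3] at h3
      linarith
    have hcast : ((5 * (-2 : ℤ) ^ (η + 1) : ℤ) : ℚ) = ((8 : ℤ) : ℚ) := by
      push_cast
      convert hval using 2
    have hint : (5 : ℤ) * (-2) ^ (η + 1) = 8 := by exact_mod_cast hcast
    obtain ⟨m, hm⟩ : ∃ m : ℤ, 5 * m = 8 := ⟨(-2) ^ (η + 1), hint⟩
    omega
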